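/- In the setting of a nilpotent skew-adjoint x on a symplectic space (V, ω) with x² = 0, if L ⊆ im x is a line that is isotropic for the induced form χ on im x (χ(x v₁, x v₂) = ω(v₁, x v₂)), then L^⊥ = x^{-1}(L), where L^⊥ is the ω-orthogonal of L in V. -/
import Mathlib


open Module

/-- The orthogonal complement `W^⊥ = {v : ω(v, w) = 0 for all w ∈ W}` of `W`
with respect to a bilinear form `ω`. -/
def perp {K V : Type*} [Field K] [AddCommGroup V] [Module K V]
    (ω : V →ₗ[K] V →ₗ[K] K) (U : Submodule K V) : Submodule K V where
  carrier := {v | ∀ u ∈ U, ω v u = 0}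
  zero_mem' := by intro u hu; simp
  add_mem' := by
    intro a b ha hb u hu
    rw [Set.mem_setOf_eq] at ha hb
    rw [map_add, LinearMap.add_apply, ha u hu, hb u hu, add_zero]
  smul_mem' := by
    intro c a ha u hu
    rw [Set.mem_setOf_eq] at ha
    rw [map_smul, LinearMap.smul_apply, ha u hu, smul_zero]


open Module

/-- Let `(V, ω)` be a finite-dimensional symplectic space over an algebraically closed
field of characteristic zero and `x` a nilpotent skew-adjoint endomorphism with `x² = 0`
(of rank `2`, as in the example of Jordan type `(2,2,1,1)` where the induced form `χ` on
the `2`-dimensional space `im x` has exactly two isotropic lines).  If `L ⊆ im x` is a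
line which is isotropic for the induced form `χ(x v₁, x v₂) = ω(v₁, x v₂)`, then
`L^⊥ = x⁻¹(L)`. -/
theorem stmt19 {K V : Type*} [Field K] [IsAlgClosed K] [CharZero K]
    [AddCommGroup V] [Module K V] [FiniteDimensional K V]
    (ω : V →ₗ[K] V →ₗ[K] K)
    (hnd : ∀ v, (∀ w, ω v w = 0) → v = 0)
    (halt : ∀ v, ω v v = 0)
    (x : V →ₗ[K] V) (hskew : ∀ v w, ω (x v) w = - ω v (x w))
    (hx2 : x ^ 2 = 0) (hrank : finrank K ↥(LinearMap.range x) = 2)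
    (L : Submodule K V) (hL : L ≤ LinearMap.range x) (hLdim : finrank K ↥L = 1)
    (hiso : ∀ v : V, x v ∈ L → ω v (x v) = 0) :
    perp ω L = Submodule.comap x L := by

  classical
  -- generator of L
  have hL0 : L ≠ ⊥ := by
    intro h
    rw [h] at hLdim
    simp at hLdim
  obtain ⟨u₀, hu₀L, hu₀ne⟩ := Submodule.exists_mem_ne_zero_of_ne_bot hL0
  have hspanL : Submodule.span K {u₀} = L := by
    apply Submodule.eq_of_le_of_finrank_le
    · rwa [Submodule.span_singleton_le_iff_mem]
    · rw [hLdim, finrank_span_singleton hu₀ne]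
  obtain ⟨v₀, hv₀⟩ := hL hu₀L
  have hv₀L : x v₀ ∈ L := by rw [hv₀]; exact hu₀L
  have hiso' : ω v₀ (x v₀) = 0 := hiso v₀ hv₀L
  have hmemL : ∀ u : V, u ∈ L ↔ ∃ c : K, c • u₀ = u := by
    intro u
    rw [← hspanL, Submodule.mem_span_singleton]
  have hmemP : ∀ v : V, v ∈ perp ω L ↔ ∀ u ∈ L, ω v u = 0 := fun _ => Iff.rfl
  -- comap ≤ perp
  have hle : Submodule.comap x L ≤ perp ω L := by
    intro v hv
    rw [Submodule.mem_comap] at hv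
    rw [hmemP]
    intro u hu
    obtain ⟨a, ha⟩ := (hmemL (x v)).1 hv
    obtain ⟨c, hc⟩ := (hmemL u).1 hu
    have h1 : ω v u = c * ω v (x v₀) := by
      rw [← hc, ← hv₀, map_smul, smul_eq_mul]
    have h2 : ω (x v) v₀ = - ω v (x v₀) := hskew v v₀
    have h3 : ω (x v) v₀ = a * ω (x v₀) v₀ := by
      rw [← ha, ← hv₀, map_smul, LinearMap.smul_apply, smul_eq_mul]
    have h4 : ω (x v₀) v₀ = - ω v₀ (x v₀) := hskew v₀ v₀
    have h5 : ω (x v₀) v₀ = 0 := by rw [h4, hiso', neg_zero]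
    rw [h5, mul_zero] at h3
    rw [h3] at h2
    rw [h1]
    have h6 : ω v (x v₀) = 0 := by linear_combination h2
    rw [h6, mul_zero]
  -- antisymmetry
  have hanti : ∀ a b : V, ω a b = - ω b a := by
    intro a b
    have h := halt (a + b)
    simp only [map_add, LinearMap.add_apply] at h
    rw [halt a, halt b] at h
    linear_combination h
  -- finrank of perp
  set f : V →ₗ[K] K := ω.flip u₀ with hf
  have hperp_ker : perp ω L = LinearMap.ker f := by
    ext v
    rw [hmemP, LinearMap.mem_ker]
    constructor
    · intro h
      exact h u₀ hu₀L
    · intro h u hu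
      obtain ⟨c, hc⟩ := (hmemL u).1 hu
      rw [← hc, map_smul, smul_eq_mul]
      have : f v = ω v u₀ := rfl
      rw [this] at h
      rw [h, mul_zero]
  have hfrange : LinearMap.range f = ⊤ := by
    obtain ⟨w, hw⟩ : ∃ w, ω u₀ w ≠ 0 := by
      by_contra h
      push_neg at h
      exact hu₀ne (hnd u₀ h)
    have hfw : f w ≠ 0 := by
      have : f w = ω w u₀ := rfl
      rw [this, hanti w u₀]
      simpa using hw
    rw [LinearMap.range_eq_top]
    intro c
    refine ⟨(c * (f w)⁻¹) • w, ?_⟩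
    rw [map_smul, smul_eq_mul, mul_assoc, inv_mul_cancel₀ hfw, mul_one]
  have hfranknull := LinearMap.finrank_range_add_finrank_ker f
  rw [hfrange, finrank_top, finrank_self] at hfranknull
  -- finrank of comap
  have hxv₀ne : v₀ ≠ 0 := by
    intro h
    rw [h, map_zero] at hv₀
    exact hu₀ne hv₀.symm
  have hsuple : LinearMap.ker x ⊔ Submodule.span K {v₀} ≤ Submodule.comap x L := by
    apply sup_le
    · intro z hz
      rw [Submodule.mem_comap]
      rw [LinearMap.mem_ker] at hz
      rw [hz]
      exact L.zero_mem
    · rw [Submodule.span_singleton_le_iff_mem, Submodule.mem_comap]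
      exact hv₀L
  have hinf : LinearMap.ker x ⊓ Submodule.span K {v₀} = ⊥ := by
    rw [eq_bot_iff]
    intro z hz
    rw [Submodule.mem_inf] at hz
    obtain ⟨hz1, hz2⟩ := hz
    rw [Submodule.mem_span_singleton] at hz2
    obtain ⟨c, hc⟩ := hz2
    rw [LinearMap.mem_ker, ← hc, map_smul, hv₀] at hz1
    rw [Submodule.mem_bot]
    rcases smul_eq_zero.1 hz1 with h | h
    · rw [← hc, h, zero_smul]
    · exact absurd h hu₀ne
  have hsupinf := Submodule.finrank_sup_add_finrank_inf_eq (LinearMap.ker x)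
    (Submodule.span K {v₀})
  rw [hinf, finrank_bot, finrank_span_singleton hxv₀ne] at hsupinf
  have hxranknull := LinearMap.finrank_range_add_finrank_ker x
  rw [hrank] at hxranknull
  have hmono : finrank K ↥(LinearMap.ker x ⊔ Submodule.span K {v₀}) ≤
      finrank K ↥(Submodule.comap x L) := Submodule.finrank_mono hsuple
  have hperpfin : finrank K ↥(perp ω L) = finrank K V - 1 := by
    rw [hperp_ker]; omega
  refine (Submodule.eq_of_le_of_finrank_le hle ?_).symm
  rw [hperpfin]
  omega
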